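/- Let k be a field and m, p ≥ 0. Then the Wronskian of the consecutive monomials X^p, X^(p+1), …, X^(p+m−1) is Wr(fun γ : Fin m => X^(p+γ)) = ((∏_{r=1}^{m−1} r!) : ℕ) • X^(m*p), where the product of factorials is cast from ℕ into k. -/

import Mathlib

open Polynomial

/-- The Wronskian of a family `f : Fin m → Polynomial k`. -/
noncomputable def Wr {k : Type*} [Field k] {m : ℕ} (f : Fin m → Polynomial k) : Polynomial k :=
  Matrix.det (Matrix.of fun i j : Fin m => Polynomial.derivative^[(i : ℕ)] (f j))

theorem wronskian_consecutive_monomials {k : Type*} [Field k] (m p : ℕ) :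
    Wr (fun γ : Fin m => (Polynomial.X : Polynomial k) ^ (p + (γ : ℕ))) =
      (∏ r ∈ Finset.Icc 1 (m - 1), Nat.factorial r) •
        (Polynomial.X : Polynomial k) ^ (m * p) := by
  rcases m with _ | n
  · simp [Wr, Matrix.det_fin_zero]
  set m := n + 1 with hm
  have hrhs : ((∏ r ∈ Finset.Icc 1 (m - 1), Nat.factorial r) •
        (Polynomial.X : Polynomial k) ^ (m * p))
      = C ((Nat.superFactorial n : k)) * X ^ (m * p) := by
    rw [show m - 1 = n from rfl, Nat.prod_Icc_factorial]
    simp [nsmul_eq_mul, C_eq_natCast]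
  set s : ℕ := ∑ i : Fin m, (i : ℕ) with hs
  have hX : (X : Polynomial k) ^ s ≠ 0 := pow_ne_zero _ X_ne_zero
  apply mul_left_cancel₀ hX
  have h2 : ∀ i j : Fin m,
      X ^ (i : ℕ) * (derivative^[(i : ℕ)] ((X : Polynomial k) ^ (p + (j : ℕ))))
      = X ^ (p + (j : ℕ)) * C (((p + (j : ℕ)).descFactorial i : k)) := by
    intro i j
    rw [iterate_derivative_X_pow_eq_C_mul]
    rcases le_or_gt (i : ℕ) (p + (j : ℕ)) with h | h
    · rw [mul_left_comm, ← pow_add, Nat.add_sub_cancel' h, mul_comm]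
    · rw [Nat.descFactorial_eq_zero_iff_lt.mpr h]
      simp
  have h1 : (X : Polynomial k) ^ s *
      Wr (fun γ : Fin m => (Polynomial.X : Polynomial k) ^ (p + (γ : ℕ)))
      = Matrix.det (Matrix.of fun i j : Fin m =>
          X ^ (i : ℕ) * (derivative^[(i : ℕ)] ((X : Polynomial k) ^ (p + (j : ℕ))))) := by
    have := Matrix.det_mul_column (fun i : Fin m => (X : Polynomial k) ^ (i : ℕ))
      (Matrix.of fun i j : Fin m => derivative^[(i : ℕ)] ((X : Polynomial k) ^ (p + (j : ℕ))))
    rw [Finset.prod_pow_eq_pow_sum] at this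
    exact this.symm
  have h3 : Matrix.det (Matrix.of fun i j : Fin m =>
        X ^ (i : ℕ) * (derivative^[(i : ℕ)] ((X : Polynomial k) ^ (p + (j : ℕ)))))
      = (∏ j : Fin m, (X : Polynomial k) ^ (p + (j : ℕ))) *
        Matrix.det (Matrix.of fun i j : Fin m => C (((p + (j : ℕ)).descFactorial i : k))) := by
    rw [show (Matrix.of fun i j : Fin m =>
        X ^ (i : ℕ) * (derivative^[(i : ℕ)] ((X : Polynomial k) ^ (p + (j : ℕ)))))
        = Matrix.of fun i j : Fin m =>
          X ^ (p + (j : ℕ)) * C (((p + (j : ℕ)).descFactorial i : k)) from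
      Matrix.ext fun i j => h2 i j]
    exact Matrix.det_mul_row _ _
  have hdetC : Matrix.det (Matrix.of fun i j : Fin m => C (((p + (j : ℕ)).descFactorial i : k)))
      = C (Matrix.det (Matrix.of fun i j : Fin m => (((p + (j : ℕ)).descFactorial i : k)))) :=
    ((C : k →+* Polynomial k).map_det _).symm
  have hdet : Matrix.det (Matrix.of fun i j : Fin m => (((p + (j : ℕ)).descFactorial i : k)))
      = (Nat.superFactorial n : k) := by
    have hB : (Matrix.of fun i j : Fin m => (((p + (j : ℕ)).descFactorial i : k)))
        = Matrix.transpose (Matrix.of fun i j : Fin m =>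
            (descPochhammer k (j : ℕ)).eval ((((p : ℕ) + (i : ℕ) : ℕ)) : k)) :=
      Matrix.ext fun i j => by
        have h := descPochhammer_eval_eq_descFactorial k (p + (j : ℕ)) (i : ℕ)
        simp only [Matrix.transpose_apply, Matrix.of_apply]
        push_cast at h ⊢
        exact h.symm
    rw [hB, Matrix.det_transpose,
      ← Matrix.det_eval_matrixOfPolynomials_eq_det_vandermonde
        (fun i : Fin m => ((((p : ℕ) + (i : ℕ) : ℕ)) : k)) (fun i : Fin m => descPochhammer k i)
        (fun i => descPochhammer_natDegree (R := k) (i : ℕ))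
        (fun i => monic_descPochhammer _ _)]
    have : (fun i : Fin m => ((((p : ℕ) + (i : ℕ) : ℕ)) : k))
        = fun i : Fin m => ((i : ℕ) : k) + (p : k) := by
      funext i; push_cast; ring
    rw [this, Matrix.det_vandermonde_add, Matrix.det_vandermonde_id_eq_superFactorial]
  have hprod : (∏ j : Fin m, (X : Polynomial k) ^ (p + (j : ℕ))) = X ^ (m * p) * X ^ s := by
    rw [Finset.prod_pow_eq_pow_sum, ← pow_add]
    congr 1
    rw [Finset.sum_add_distrib, hs]
    simp [mul_comm]
  rw [hrhs, h1, h3, hdetC, hdet, hprod]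
  ring
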